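/- arXiv:2508.01601 — 3 statements merged into one kernel-verified Lean document; each statement's English description precedes it below -/
import Mathlib

section
/- Let b : [0, ∞) → R be twice continuously differentiable, let p₁, p₂ > 0, and define φ₁ = b' + p₁·b. If b(0) ≥ 0, φ₁(0) ≥ 0, and φ₁'(t) + p₂·φ₁(t) ≥ 0 for all t ≥ 0, then b(t) ≥ 0 and φ₁(t) ≥ 0 for all t ≥ 0. -/
lemma aux_gronwall (f : ℝ → ℝ) (p : ℝ) (hf : Differentiable ℝ f)
    (h0 : 0 ≤ f 0) (h : ∀ t : ℝ, 0 ≤ t → 0 ≤ deriv f t + p * f t) :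
    ∀ t : ℝ, 0 ≤ t → 0 ≤ f t := by
  set g : ℝ → ℝ := fun t => Real.exp (p * t) * f t with hg
  have hgd : Differentiable ℝ g := by
    apply Differentiable.mul _ hf
    exact (Real.differentiable_exp.comp ((differentiable_id.const_mul p)))
  have hderiv : ∀ t : ℝ, deriv g t = Real.exp (p * t) * (deriv f t + p * f t) := by
    intro t
    have h1 : HasDerivAt (fun t : ℝ => Real.exp (p * t)) (Real.exp (p * t) * p) t := by
      simpa [Function.comp_def] using (Real.hasDerivAt_exp (p * t)).comp t
        ((hasDerivAt_id t).const_mul p)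
    have h2 : HasDerivAt g (Real.exp (p * t) * p * f t + Real.exp (p * t) * deriv f t) t :=
      h1.mul (hf t).hasDerivAt
    rw [h2.deriv]; ring
  have hmono : MonotoneOn g (Set.Ici (0:ℝ)) := by
    apply monotoneOn_of_deriv_nonneg (convex_Ici 0) hgd.continuous.continuousOn
      hgd.differentiableOn
    intro t ht
    simp only [interior_Ici, Set.mem_Ioi] at ht
    rw [hderiv t]
    exact mul_nonneg (Real.exp_pos _).le (h t ht.le)
  intro t ht
  have := hmono (Set.mem_Ici.mpr le_rfl) (Set.mem_Ici.mpr ht) ht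
  have hg0 : (0:ℝ) ≤ g 0 := by
    simp [hg, h0]
  have : 0 ≤ Real.exp (p * t) * f t := le_trans hg0 this
  exact nonneg_of_mul_nonneg_right this (Real.exp_pos _)

theorem stmt_6 (b : ℝ → ℝ) (p₁ p₂ : ℝ) (hp₁ : 0 < p₁) (hp₂ : 0 < p₂)
    (hb : ContDiff ℝ 2 b)
    (φ₁ : ℝ → ℝ) (hφ₁ : ∀ t, φ₁ t = deriv b t + p₁ * b t)
    (h0 : 0 ≤ b 0) (hφ₁0 : 0 ≤ φ₁ 0)
    (hineq : ∀ t : ℝ, 0 ≤ t → deriv φ₁ t + p₂ * φ₁ t ≥ 0) :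
    ∀ t : ℝ, 0 ≤ t → 0 ≤ b t ∧ 0 ≤ φ₁ t := by
  have hb1 : Differentiable ℝ b := hb.differentiable (by norm_num)
  have hdb : Differentiable ℝ (deriv b) := by
    have := (hb.iterate_deriv' 1 1).differentiable (by norm_num)
    simpa using this
  have hφd : Differentiable ℝ φ₁ := by
    have h : Differentiable ℝ (fun t => deriv b t + p₁ * b t) := hdb.add (hb1.const_mul p₁)
    have : φ₁ = fun t => deriv b t + p₁ * b t := funext hφ₁
    rw [this]; exact h
  have hφpos : ∀ t : ℝ, 0 ≤ t → 0 ≤ φ₁ t :=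
    aux_gronwall φ₁ p₂ hφd hφ₁0 (fun t ht => hineq t ht)
  have hbpos : ∀ t : ℝ, 0 ≤ t → 0 ≤ b t := by
    apply aux_gronwall b p₁ hb1 h0
    intro t ht
    rw [← hφ₁ t]; exact hφpos t ht
  exact fun t ht => ⟨hbpos t ht, hφpos t ht⟩
end

section
/- Let m ≥ 1, b : [0, ∞) → R be m-times continuously differentiable, and p₁,…,p_m > 0. Define recursively ϑ₀ = b and ϑ_i = ϑ_{i−1}' + p_i·ϑ_{i−1} for i = 1,…,m. If ϑ_i(0) ≥ 0 for all i = 0,…,m−1 and ϑ_m(t) ≥ 0 for all t ≥ 0, then ϑ_i(t) ≥ 0 for all i = 0,…,m−1 and all t ≥ 0; in particular b(t) ≥ 0 for all t. -/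
lemma comp_lem (θ : ℝ → ℝ) (q : ℝ) (hq : 0 < q) (hθ : Differentiable ℝ θ)
    (h0 : 0 ≤ θ 0) (hd : ∀ t, 0 ≤ t → 0 ≤ deriv θ t + q * θ t) :
    ∀ t, 0 ≤ t → 0 ≤ θ t := by
  set g : ℝ → ℝ := fun t => Real.exp (q * t) * θ t with hg_def
  have hgd : ∀ t, HasDerivAt g (Real.exp (q * t) * (deriv θ t + q * θ t)) t := by
    intro t
    have h1 : HasDerivAt (fun t : ℝ => q * t) q t := by
      simpa using (hasDerivAt_id t).const_mul q
    have h2 := h1.exp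
    have h3 := (hθ t).hasDerivAt
    have := h2.mul h3
    exact this.congr_deriv (by ring)
  have hg : Differentiable ℝ g := fun t => (hgd t).differentiableAt
  have hmono : MonotoneOn g (Set.Ici (0 : ℝ)) := by
    apply monotoneOn_of_deriv_nonneg (convex_Ici 0) hg.continuous.continuousOn
      (fun t _ => (hg t).differentiableWithinAt)
    intro t ht
    rw [interior_Ici] at ht
    rw [(hgd t).deriv]
    exact mul_nonneg (Real.exp_nonneg _) (hd t (le_of_lt ht))
  intro t ht
  have h1 : g 0 ≤ g t := hmono (Set.self_mem_Ici) ht ht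
  have h2 : g 0 = θ 0 := by simp [hg_def]
  have h3 : (0:ℝ) ≤ g t := le_trans (h2 ▸ h0) h1
  simp only [hg_def] at h3
  nlinarith [Real.exp_pos (q * t)]

theorem stmt_7 (m : ℕ) (hm : 1 ≤ m) (b : ℝ → ℝ) (p : ℕ → ℝ)
    (hp : ∀ i, 1 ≤ i → i ≤ m → 0 < p i)
    (hb : ContDiff ℝ m b)
    (ϑ : ℕ → ℝ → ℝ) (hϑ0 : ϑ 0 = b)
    (hϑ : ∀ i, i < m → ∀ t, ϑ (i + 1) t = deriv (ϑ i) t + p (i + 1) * ϑ i t)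
    (hinit : ∀ i, i < m → 0 ≤ ϑ i 0)
    (hfin : ∀ t : ℝ, 0 ≤ t → 0 ≤ ϑ m t) :
    (∀ i, i < m → ∀ t : ℝ, 0 ≤ t → 0 ≤ ϑ i t) ∧ ∀ t : ℝ, 0 ≤ t → 0 ≤ b t := by
  -- smoothness of each ϑ i
  have hs : ∀ i, i ≤ m → ContDiff ℝ ((m - i : ℕ) : WithTop ℕ∞) (ϑ i) := by
    intro i
    induction i with
    | zero => intro _; simpa [hϑ0] using hb
    | succ i ih =>
      intro hi
      have hi' : i ≤ m := by omega
      have h1 := ih hi'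
      have hcast : ((m - i : ℕ) : WithTop ℕ∞) = ((m - (i + 1) : ℕ) : WithTop ℕ∞) + 1 := by
        rw [show m - i = (m - (i + 1)) + 1 from by omega, Nat.cast_add, Nat.cast_one]
      have h0 : ContDiff ℝ ((m - (i + 1) : ℕ) : WithTop ℕ∞) (ϑ i) :=
        h1.of_le (by rw [hcast]; exact le_self_add)
      rw [hcast, contDiff_succ_iff_deriv] at h1
      have heq : ϑ (i + 1) = fun t => deriv (ϑ i) t + p (i + 1) * ϑ i t := by
        funext t; exact hϑ i (by omega) t
      rw [heq]
      exact h1.2.2.add (contDiff_const.mul h0)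
  have hdiff : ∀ i, i < m → Differentiable ℝ (ϑ i) := by
    intro i hi
    have := hs i (le_of_lt hi)
    apply this.differentiable
    exact_mod_cast (by omega : m - i ≠ 0)
  have key : ∀ j, j ≤ m → ∀ t, 0 ≤ t → 0 ≤ ϑ (m - j) t := by
    intro j
    induction j with
    | zero => simpa using hfin
    | succ j ih =>
      intro hj t ht
      set i := m - (j + 1) with hi_def
      have hi : i < m := by omega
      have hnext : i + 1 = m - j := by omega
      refine comp_lem (ϑ i) (p (i + 1)) (hp (i + 1) (by omega) (by omega))
        (hdiff i hi) (hinit i hi) ?_ t ht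
      intro s hs'
      have := hϑ i hi s
      have h2 : 0 ≤ ϑ (i + 1) s := by rw [hnext]; exact ih (by omega) s hs'
      linarith [this ▸ h2]
  have main : ∀ i, i < m → ∀ t : ℝ, 0 ≤ t → 0 ≤ ϑ i t := by
    intro i hi t ht
    have : i = m - (m - i) := by omega
    rw [this]
    exact key (m - i) (by omega) t ht
  exact ⟨main, fun t ht => by rw [← hϑ0]; exact main 0 hm t ht⟩
end

section
/- Let b̃₀, …, b̃_m : [0,∞) → R be differentiable functions with b̃_{i−1}'(t) ≥ b̃_i(t) for all t and i = 1,…,m. Let p₁,…,p_m > 0 and let c^i_j be the coefficients of ∏_{l=1}^{i}(s+p_l). Define φ̃_i = b̃_i + Σ_{j=0}^{i−1} c^i_j b̃_j for i = 1,…,m and φ̃₀ = b̃₀. If φ̃_i(0) ≥ 0 for i = 0,…,m−1 and φ̃_m(t) ≥ 0 for all t ≥ 0, then φ̃_i(t) ≥ 0 for all i = 0,…,m−1 and t ≥ 0; in particular b̃₀(t) ≥ 0 for all t. -/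
open Polynomial Finset in
private lemma aux_coeff_nonneg (p : ℕ → ℝ) (s : Finset ℕ) (hp : ∀ l ∈ s, 0 ≤ p l) (j : ℕ) :
    0 ≤ (∏ l ∈ s, (X + C (p l))).coeff j := by
  induction s using Finset.induction generalizing j with
  | empty => simp [Polynomial.coeff_one]; positivity
  | @insert a s ha ih =>
    rw [Finset.prod_insert ha, Polynomial.coeff_mul]
    apply Finset.sum_nonneg
    intro x _
    apply mul_nonneg
    · have : 0 ≤ p a := hp a (Finset.mem_insert_self a s)
      rcases x.1 with _ | _ | k <;> simp [coeff_add, coeff_X, coeff_C, this]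
    · exact ih (fun l hl => hp l (Finset.mem_insert_of_mem hl)) x.2

open Polynomial Finset in
private lemma aux_coeff_top (p : ℕ → ℝ) (i : ℕ) :
    (∏ l ∈ Finset.Icc 1 i, (X + C (p l))).coeff i = 1 := by
  have hm : (∏ l ∈ Finset.Icc 1 i, (X + C (p l))).Monic :=
    monic_prod_of_monic _ _ (fun l _ => monic_X_add_C _)
  have hd : (∏ l ∈ Finset.Icc 1 i, (X + C (p l))).natDegree = i := by
    rw [natDegree_prod_of_monic _ _ (fun l _ => monic_X_add_C _)]; simp
  have := hm.coeff_natDegree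
  rwa [hd] at this

open Polynomial Finset in
private lemma aux_coeff_zero (p : ℕ → ℝ) (i j : ℕ) (h : i < j) :
    (∏ l ∈ Finset.Icc 1 i, (X + C (p l))).coeff j = 0 := by
  apply coeff_eq_zero_of_natDegree_lt
  rw [natDegree_prod_of_monic _ _ (fun l _ => monic_X_add_C _)]; simpa

private lemma aux_gronwall_s18 (G : ℝ → ℝ) (a : ℝ) (hG : Differentiable ℝ G)
    (h0 : 0 ≤ G 0) (hd : ∀ t, 0 ≤ t → 0 ≤ deriv G t + a * G t) :
    ∀ t, 0 ≤ t → 0 ≤ G t := by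
  intro t ht
  have hgd : ∀ s : ℝ, HasDerivAt (fun u => Real.exp (a * u) * G u)
      (Real.exp (a * s) * (deriv G s + a * G s)) s := by
    intro s
    have h1 : HasDerivAt (fun u => Real.exp (a * u)) (Real.exp (a * s) * a) s := by
      have h2 : HasDerivAt (fun u : ℝ => a * u) a s := by
        simpa using (hasDerivAt_id s).const_mul a
      exact (Real.hasDerivAt_exp (a * s)).comp s h2
    have := h1.fun_mul (hG s).hasDerivAt
    refine this.congr_deriv ?_
    ring
  have hdiffg : Differentiable ℝ (fun u => Real.exp (a * u) * G u) :=
    fun s => (hgd s).differentiableAt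
  have mono : MonotoneOn (fun u => Real.exp (a * u) * G u) (Set.Ici 0) := by
    apply monotoneOn_of_deriv_nonneg (convex_Ici 0) hdiffg.continuous.continuousOn
      (hdiffg.differentiableOn)
    intro s hs
    rw [interior_Ici, Set.mem_Ioi] at hs
    rw [(hgd s).deriv]
    exact mul_nonneg (Real.exp_nonneg _) (hd s hs.le)
  have := mono (Set.mem_Ici.mpr le_rfl) (Set.mem_Ici.mpr ht) ht
  simp only at this
  nlinarith [Real.exp_pos (a * t), Real.exp_pos (a * 0)]

theorem stmt_18 (m : ℕ) (hm : 1 ≤ m) (b : ℕ → ℝ → ℝ) (p : ℕ → ℝ)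
    (hp : ∀ i, 1 ≤ i → i ≤ m → 0 < p i)
    (hdiff : ∀ i, i ≤ m → Differentiable ℝ (b i))
    (hlb : ∀ i, 1 ≤ i → i ≤ m → ∀ t : ℝ, deriv (b (i - 1)) t ≥ b i t)
    (φ : ℕ → ℝ → ℝ)
    (hφ : ∀ i, i ≤ m → ∀ t : ℝ, φ i t = b i t +
      ∑ j ∈ Finset.range i,
        (∏ l ∈ Finset.Icc 1 i, (Polynomial.X + Polynomial.C (p l))).coeff j * b j t)
    (hinit : ∀ i, i < m → 0 ≤ φ i 0)
    (hfin : ∀ t : ℝ, 0 ≤ t → 0 ≤ φ m t) :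
    (∀ i, i < m → ∀ t : ℝ, 0 ≤ t → 0 ≤ φ i t) ∧
    ∀ t : ℝ, 0 ≤ t → 0 ≤ b 0 t := by
  classical
  set P : ℕ → Polynomial ℝ :=
    fun i => ∏ l ∈ Finset.Icc 1 i, (Polynomial.X + Polynomial.C (p l)) with hP
  set F : ℕ → ℝ → ℝ :=
    fun i t => ∑ j ∈ Finset.range (i+1), (P i).coeff j * b j t with hF
  -- φ agrees with F
  have hφF : ∀ i, i ≤ m → ∀ t, φ i t = F i t := by
    intro i hi t
    rw [hφ i hi t, hF]
    simp only [Finset.sum_range_succ, aux_coeff_top p i, one_mul]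
    simp only [hP, aux_coeff_top p i]
    ring
  -- coeff nonneg for relevant indices
  have hcnn : ∀ i, i ≤ m → ∀ j, 0 ≤ (P i).coeff j := by
    intro i hi j
    exact aux_coeff_nonneg p _ (fun l hl => (hp l (Finset.mem_Icc.mp hl).1
      (le_trans (Finset.mem_Icc.mp hl).2 hi)).le) j
  -- derivative of F i
  have hFd : ∀ i, i ≤ m → ∀ t, HasDerivAt (F i)
      (∑ j ∈ Finset.range (i+1), (P i).coeff j * deriv (b j) t) t := by
    intro i hi t
    apply HasDerivAt.fun_sum
    intro j hj
    exact ((hdiff j (le_trans (Nat.lt_succ_iff.mp (Finset.mem_range.mp hj)) hi) t).hasDerivAt).const_mul _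
  -- key inequality
  have hkey : ∀ k, k + 1 ≤ m → ∀ t,
      F (k+1) t ≤ deriv (F k) t + p (k+1) * F k t := by
    intro k hk t
    have hrec : P (k+1) = P k * (Polynomial.X + Polynomial.C (p (k+1))) := by
      rw [hP]
      exact Finset.prod_Icc_succ_top (Nat.succ_le_succ (Nat.zero_le k)) _
    have hd0 : (P (k+1)).coeff 0 = p (k+1) * (P k).coeff 0 := by
      rw [hrec]; simp [mul_add, Polynomial.coeff_add, Polynomial.coeff_mul_C, mul_comm]
    have hdsucc : ∀ j, (P (k+1)).coeff (j+1) =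
        (P k).coeff j + p (k+1) * (P k).coeff (j+1) := by
      intro j
      rw [hrec, mul_add, Polynomial.coeff_add, Polynomial.coeff_mul_X,
        Polynomial.coeff_mul_C]
      ring
    have heq : F (k+1) t =
        (∑ j ∈ Finset.range (k+1), (P k).coeff j * b (j+1) t) + p (k+1) * F k t := by
      rw [hF]
      simp only
      rw [Finset.sum_range_succ' (fun j => (P (k+1)).coeff j * b j t) (k+1)]
      have e1 : ∀ j ∈ Finset.range (k+1), (P (k+1)).coeff (j+1) * b (j+1) t =
          (P k).coeff j * b (j+1) t + p (k+1) * ((P k).coeff (j+1) * b (j+1) t) := by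
        intro j _
        rw [hdsucc j]; ring
      rw [Finset.sum_congr rfl e1, Finset.sum_add_distrib, ← Finset.mul_sum, hd0]
      have e2 : (∑ j ∈ Finset.range (k+1), (P k).coeff (j+1) * b (j+1) t)
          + (P k).coeff 0 * b 0 t = ∑ j ∈ Finset.range (k+2), (P k).coeff j * b j t := by
        rw [Finset.sum_range_succ' (fun j => (P k).coeff j * b j t) (k+1)]
      have e3 : ∑ j ∈ Finset.range (k+2), (P k).coeff j * b j t
          = ∑ j ∈ Finset.range (k+1), (P k).coeff j * b j t := by
        rw [Finset.sum_range_succ, aux_coeff_zero p k (k+1) (Nat.lt_succ_self k)]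
        ring
      have e4 : F k t = ∑ j ∈ Finset.range (k+1), (P k).coeff j * b j t := rfl
      rw [← e3, ← e2]; ring
    rw [heq, (hFd k (by omega) t).deriv]
    apply add_le_add_left
    apply Finset.sum_le_sum
    intro j hj
    have hj' : j + 1 ≤ m := by
      have := Finset.mem_range.mp hj; omega
    have := hlb (j+1) (Nat.succ_le_succ (Nat.zero_le j)) hj' t
    simp only [Nat.add_sub_cancel] at this
    exact mul_le_mul_of_nonneg_left this (hcnn k (by omega) j)
  -- downward induction
  have main : ∀ k, k ≤ m → ∀ t, 0 ≤ t → 0 ≤ φ (m - k) t := by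
    intro k
    induction k with
    | zero => simpa using hfin
    | succ k ih =>
      intro hk t ht
      have ihm : ∀ t, 0 ≤ t → 0 ≤ φ (m - k) t := ih (by omega)
      set i := m - (k+1) with hi
      have him : m - k = i + 1 := by omega
      have hi1 : i + 1 ≤ m := by omega
      have hG0 : 0 ≤ F i 0 := by
        rw [← hφF i (by omega) 0]
        exact hinit i (by omega)
      have hGdiff : Differentiable ℝ (F i) := fun s => (hFd i (by omega) s).differentiableAt
      have hGd : ∀ s, 0 ≤ s → 0 ≤ deriv (F i) s + p (i+1) * F i s := by
        intro s hs
        have h1 : 0 ≤ F (i+1) s := by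
          rw [← hφF (i+1) hi1 s, ← him]
          exact ihm s hs
        linarith [hkey i hi1 s]
      have := aux_gronwall_s18 (F i) (p (i+1)) hGdiff hG0 hGd t ht
      rwa [hφF i (by omega) t]
  constructor
  · intro i him t ht
    have h1 : i = m - (m - i) := by omega
    rw [h1]
    exact main (m - i) (by omega) t ht
  · intro t ht
    have h1 : 0 ≤ φ 0 t := by
      have : (0:ℕ) = m - m := by omega
      rw [this]
      exact main m le_rfl t ht
    have h2 := hφ 0 (by omega) t
    simp at h2
    rwa [h2] at h1
end
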